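/- Fix m₀ ∈ ℕ, m₀ ≥ 1, and set εₙ = n^{−m₀/(2m₀+1)} (log n)^{1/2} and (τ²)* = n^{−1/(2m₀+1)}. Let k ∈ (0,1], let c_λ > 0, and let p_n be the Weibull(k, λ_n) density p_n(τ²) = k λ_n^k (τ²)^{k−1} exp(−(λ_n τ²)^k) with λ_n = c_λ (nεₙ²)^{1/k}/(τ²)*. Then: (a) p_n is monotonically decreasing on (0,∞); (b) there exists c₁ > 0 such that p_n(c₁ (τ²)*) ≥ exp(−nεₙ²) for all sufficiently large n; (c) there exists c₂ > 0 such that ∫_{c₂(τ²)*}^∞ p_n(τ²) dτ² ≤ exp(−5 nεₙ²) for all sufficiently large n. -/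

import Mathlib

open MeasureTheory Real

open Filter Set Topology in
lemma weibull_tail_aux (k lam a : ℝ) (hk : 0 < k) (hlam : 0 < lam) (ha : 0 < a) :
    (∫ τ in Set.Ioi a, k * lam ^ k * τ ^ (k - 1) * Real.exp (-((lam * τ) ^ k)))
      = Real.exp (-((lam * a) ^ k)) := by
  have hderiv : ∀ x ∈ Set.Ioi a, HasDerivAt (fun τ => -Real.exp (-((lam * τ) ^ k)))
      (k * lam ^ k * x ^ (k - 1) * Real.exp (-((lam * x) ^ k))) x := by
    intro x hx
    have hxpos : 0 < x := ha.trans hx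
    have h1 : HasDerivAt (fun τ : ℝ => lam * τ) lam x := by
      simpa using (hasDerivAt_id x).const_mul lam
    have h2 : HasDerivAt (fun τ : ℝ => (lam * τ) ^ k)
        (lam * k * (lam * x) ^ (k - 1)) x :=
      h1.rpow_const (Or.inl (mul_pos hlam hxpos).ne')
    have h3 := ((h2.neg).exp).neg
    convert h3 using 1
    case e'_4 => rfl
    case e'_5 => rfl
    case e'_8 => rfl
    have hsplit : (lam * x) ^ (k - 1) = lam ^ (k - 1) * x ^ (k - 1) :=
      Real.mul_rpow hlam.le hxpos.le
    have hl : lam * lam ^ (k - 1) = lam ^ k := by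
      nth_rewrite 1 [← Real.rpow_one lam]
      rw [← Real.rpow_add hlam]; ring_nf
    rw [hsplit]
    linear_combination (-(k * x ^ (k - 1) * Real.exp (-((lam * x) ^ k)))) * hl
  have hcont : ContinuousWithinAt (fun τ => -Real.exp (-((lam * τ) ^ k))) (Set.Ici a) a := by
    apply ContinuousAt.continuousWithinAt
    have : ContinuousAt (fun τ : ℝ => (lam * τ) ^ k) a :=
      (Real.continuousAt_rpow_const _ _ (Or.inl (mul_pos hlam ha).ne')).comp
        (by fun_prop)
    exact ((this.neg).rexp).neg
  have htend : Tendsto (fun τ => -Real.exp (-((lam * τ) ^ k))) atTop (𝓝 0) := by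
    have h1 : Tendsto (fun τ : ℝ => lam * τ) atTop atTop :=
      Filter.tendsto_id.const_mul_atTop hlam
    have h2 : Tendsto (fun τ : ℝ => (lam * τ) ^ k) atTop atTop :=
      (tendsto_rpow_atTop hk).comp h1
    have := (Real.tendsto_exp_neg_atTop_nhds_zero.comp h2).neg
    simpa using this
  have key := integral_Ioi_of_hasDerivAt_of_nonneg hcont hderiv
    (fun x hx => by
      have hxpos : 0 < x := ha.trans hx
      positivity) htend
  rw [key]; ring

/-- The Weibull hyperprior with shape `k ∈ (0,1]` and rate
`λₙ = c_λ (nεₙ²)^{1/k}/(τ²)*` satisfies Assumption A5: (a) its density is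
monotonically decreasing on `(0,∞)`; (b) it is sufficiently thick at `c₁(τ²)*`;
(c) its tail mass beyond `c₂(τ²)*` is at most `exp(-5nεₙ²)`, eventually. -/
theorem stmt_13 (m0 : ℕ) (hm0 : 1 ≤ m0) (k c_lam : ℝ)
    (hk0 : 0 < k) (hk1 : k ≤ 1) (hc : 0 < c_lam) :
    let εn : ℕ → ℝ := fun n =>
      (n : ℝ) ^ (-(m0 : ℝ) / (2 * m0 + 1)) * Real.sqrt (Real.log n)
    let τs : ℕ → ℝ := fun n => (n : ℝ) ^ (-(1 : ℝ) / (2 * m0 + 1))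
    let lam : ℕ → ℝ := fun n => c_lam * ((n : ℝ) * (εn n) ^ 2) ^ (1 / k) / τs n
    let pn : ℕ → ℝ → ℝ := fun n τ =>
      k * (lam n) ^ k * τ ^ (k - 1) * Real.exp (-((lam n * τ) ^ k))
    (∀ n : ℕ, AntitoneOn (pn n) (Set.Ioi 0)) ∧
    (∃ c1 : ℝ, 0 < c1 ∧ ∃ N : ℕ, ∀ n ≥ N,
      Real.exp (-((n : ℝ) * (εn n) ^ 2)) ≤ pn n (c1 * τs n)) ∧
    (∃ c2 : ℝ, 0 < c2 ∧ ∃ N : ℕ, ∀ n ≥ N,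
      (∫ τ in Set.Ioi (c2 * τs n), pn n τ)
        ≤ Real.exp (-(5 * ((n : ℝ) * (εn n) ^ 2)))) := by
  intro εn τs lam pn
  set A : ℕ → ℝ := fun n => (n : ℝ) * (εn n) ^ 2 with hA_def
  -- basic positivity facts
  have hlam_nonneg : ∀ n : ℕ, 0 ≤ lam n := by
    intro n
    have h1 : (0:ℝ) ≤ (n : ℝ) * (εn n) ^ 2 := by positivity
    have h2 : (0:ℝ) ≤ τs n := Real.rpow_nonneg (Nat.cast_nonneg n) _
    exact div_nonneg (mul_nonneg hc.le (Real.rpow_nonneg h1 _)) h2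
  have hτs_pos : ∀ n : ℕ, 2 ≤ n → 0 < τs n := by
    intro n hn
    exact Real.rpow_pos_of_pos (by exact_mod_cast Nat.lt_of_lt_of_le Nat.zero_lt_two hn) _
  have hτs_le1 : ∀ n : ℕ, 2 ≤ n → τs n ≤ 1 := by
    intro n hn
    apply Real.rpow_le_one_of_one_le_of_nonpos
    · exact_mod_cast Nat.one_le_of_lt hn
    · rw [div_nonpos_iff]; right
      exact ⟨by norm_num, by positivity⟩
  have hA_pos : ∀ n : ℕ, 2 ≤ n → 0 < A n := by
    intro n hn
    have hn1 : (1:ℝ) < n := by exact_mod_cast hn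
    have h0 : (0:ℝ) < n := by linarith
    have hlog : 0 < Real.log n := Real.log_pos hn1
    have hs : 0 < Real.sqrt (Real.log n) := Real.sqrt_pos.mpr hlog
    exact mul_pos h0 (pow_pos (mul_pos (Real.rpow_pos_of_pos h0 _) hs) 2)
  have hA_ge_log : ∀ n : ℕ, 2 ≤ n → Real.log n ≤ A n := by
    intro n hn
    have hn1 : (1:ℝ) < n := by exact_mod_cast hn
    have h0 : (0:ℝ) < n := by linarith
    have hlog : 0 ≤ Real.log n := (Real.log_pos hn1).le
    set e : ℝ := -(m0 : ℝ) / (2 * m0 + 1) with he_def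
    have hexp : A n = ((n:ℝ) * ((n:ℝ) ^ e) ^ 2) * Real.log n := by
      simp only [hA_def, εn]
      rw [mul_pow, Real.sq_sqrt hlog]
      ring
    have hone : 1 ≤ (n:ℝ) * ((n:ℝ) ^ e) ^ 2 := by
      have h1 : ((n:ℝ) ^ e) ^ 2 = (n:ℝ) ^ (e * 2) := by
        rw [← Real.rpow_natCast ((n:ℝ) ^ e) 2, ← Real.rpow_mul h0.le]
        norm_num
      have h2 : (n:ℝ) * ((n:ℝ) ^ e) ^ 2 = (n:ℝ) ^ (1 + e * 2) := by
        rw [h1]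
        nth_rewrite 1 [← Real.rpow_one (n:ℝ)]
        rw [← Real.rpow_add h0]
      rw [h2]
      apply Real.one_le_rpow hn1.le
      have h2m : (0:ℝ) < 2 * (m0:ℝ) + 1 := by positivity
      have : 1 + e * 2 = 1 / (2 * (m0:ℝ) + 1) := by
        rw [he_def]; field_simp; ring
      rw [this]; positivity
    rw [hexp]
    calc Real.log n = 1 * Real.log n := (one_mul _).symm
      _ ≤ ((n:ℝ) * ((n:ℝ) ^ e) ^ 2) * Real.log n :=
        mul_le_mul_of_nonneg_right hone hlog
  have hlam_pos : ∀ n : ℕ, 2 ≤ n → 0 < lam n := by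
    intro n hn
    exact div_pos (mul_pos hc (Real.rpow_pos_of_pos (hA_pos n hn) _)) (hτs_pos n hn)
  -- key algebraic identities
  have hlamτ : ∀ (n : ℕ) (c : ℝ), 2 ≤ n →
      lam n * (c * τs n) = (c * c_lam) * (A n) ^ (1/k) := by
    intro n c hn
    have hτ := (hτs_pos n hn).ne'
    simp only [lam, ← hA_def]
    field_simp
    ring
  have hpow : ∀ (n : ℕ) (c : ℝ), 2 ≤ n → 0 ≤ c →
      ((c * c_lam) * (A n) ^ (1/k)) ^ k = (c * c_lam) ^ k * A n := by
    intro n c hn hcnn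
    have hA := (hA_pos n hn).le
    rw [Real.mul_rpow (by positivity) (Real.rpow_nonneg hA _),
      ← Real.rpow_mul hA, one_div, inv_mul_cancel₀ hk0.ne', Real.rpow_one]
  refine ⟨?_, ?_, ?_⟩
  · -- (a) monotone decreasing
    intro n x hx y hy hxy
    simp only [Set.mem_Ioi] at hx hy
    simp only [pn]
    have h1 : y ^ (k - 1) ≤ x ^ (k - 1) :=
      Real.rpow_le_rpow_of_nonpos hx hxy (by linarith)
    have h2 : Real.exp (-((lam n * y) ^ k)) ≤ Real.exp (-((lam n * x) ^ k)) := by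
      apply Real.exp_le_exp.mpr
      have : (lam n * x) ^ k ≤ (lam n * y) ^ k :=
        Real.rpow_le_rpow (mul_nonneg (hlam_nonneg n) hx.le)
          (mul_le_mul_of_nonneg_left hxy (hlam_nonneg n)) hk0.le
      linarith
    have hC : 0 ≤ k * (lam n) ^ k :=
      mul_nonneg hk0.le (Real.rpow_nonneg (hlam_nonneg n) _)
    exact mul_le_mul (mul_le_mul_of_nonneg_left h1 hC) h2 (Real.exp_pos _).le
      (mul_nonneg hC (Real.rpow_nonneg hx.le _))
  · -- (b) thickness at c1 * τs n
    set c1 : ℝ := min 1 (1 / c_lam) with hc1_def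
    have hc1_pos : 0 < c1 := lt_min one_pos (by positivity)
    have hc1_le1 : c1 ≤ 1 := min_le_left _ _
    set b : ℝ := (c1 * c_lam) ^ k with hb_def
    have hb_pos : 0 < b := Real.rpow_pos_of_pos (mul_pos hc1_pos hc) _
    have hb_le1 : b ≤ 1 := by
      apply Real.rpow_le_one (mul_pos hc1_pos hc).le ?_ hk0.le
      calc c1 * c_lam ≤ (1 / c_lam) * c_lam :=
            mul_le_mul_of_nonneg_right (min_le_right _ _) hc.le
        _ = 1 := by field_simp
    set M : ℝ := 1 / (k * b) with hM_def
    refine ⟨c1, hc1_pos, max 2 ⌈Real.exp M⌉₊, ?_⟩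
    intro n hn
    have hn2 : 2 ≤ n := le_trans (le_max_left _ _) hn
    have hn0 : (0:ℝ) < n := by exact_mod_cast Nat.lt_of_lt_of_le Nat.zero_lt_two hn2
    have hMlog : M ≤ Real.log n := by
      rw [Real.le_log_iff_exp_le hn0]
      calc Real.exp M ≤ (⌈Real.exp M⌉₊ : ℝ) := Nat.le_ceil _
        _ ≤ (n : ℝ) := by exact_mod_cast le_trans (le_max_right 2 _) hn
    have hA := hA_pos n hn2
    have hAM : M ≤ A n := le_trans hMlog (hA_ge_log n hn2)
    set x : ℝ := c1 * τs n with hx_def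
    have hx_pos : 0 < x := mul_pos hc1_pos (hτs_pos n hn2)
    have hx_le1 : x ≤ 1 := by
      calc x ≤ 1 * 1 := mul_le_mul hc1_le1 (hτs_le1 n hn2) (hτs_pos n hn2).le one_pos.le
        _ = 1 := one_mul 1
    have hlamp := hlam_pos n hn2
    have e2 : (lam n * x) ^ k = b * A n := by
      rw [hx_def, hlamτ n c1 hn2, hpow n c1 hn2 hc1_pos.le, hb_def]
    have e3 : (lam n) ^ k * x ^ (k - 1) = (lam n * x) ^ k / x := by
      rw [Real.mul_rpow hlamp.le hx_pos.le, Real.rpow_sub hx_pos, Real.rpow_one]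
      ring
    simp only [pn, ← hA_def, ← hx_def]
    have hkbA : 1 ≤ k * (b * A n) := by
      have h1 : 1 / (k * b) ≤ A n := hAM
      rw [div_le_iff₀ (by positivity)] at h1
      nlinarith
    calc Real.exp (-(A n)) = 1 * Real.exp (-(A n)) := (one_mul _).symm
      _ ≤ (k * ((lam n * x) ^ k) / x) * Real.exp (-((lam n * x) ^ k)) := by
          apply mul_le_mul ?_ ?_ (Real.exp_pos _).le ?_
          · rw [e2]
            calc (1:ℝ) ≤ k * (b * A n) := hkbA
              _ ≤ k * (b * A n) / x := le_div_self (by positivity) hx_pos hx_le1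
          · apply Real.exp_le_exp.mpr
            rw [e2]
            nlinarith
          · positivity
      _ = k * (lam n) ^ k * x ^ (k - 1) * Real.exp (-((lam n * x) ^ k)) := by
          rw [mul_assoc k, e3]; ring
  · -- (c) tail bound
    refine ⟨(5:ℝ) ^ (1/k) / c_lam, by positivity, 2, ?_⟩
    intro n hn
    have hτp := hτs_pos n hn
    have hlamp := hlam_pos n hn
    set c2 : ℝ := (5:ℝ) ^ (1/k) / c_lam with hc2_def
    have hc2_pos : 0 < c2 := by positivity
    have ha : 0 < c2 * τs n := mul_pos hc2_pos hτp
    simp only [pn]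
    rw [weibull_tail_aux k (lam n) (c2 * τs n) hk0 hlamp ha]
    apply le_of_eq
    congr 1
    rw [hlamτ n c2 hn, hpow n c2 hn hc2_pos.le]
    have h5 : c2 * c_lam = (5:ℝ) ^ (1/k) := by
      rw [hc2_def]; field_simp
    rw [h5, ← Real.rpow_mul (by norm_num : (0:ℝ) ≤ 5), one_div,
      inv_mul_cancel₀ hk0.ne', Real.rpow_one, hA_def]
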